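/- With F defined as the group of symplectic matrices of the constrained block form (freedom gauge group for an [[n,k]] code), its cardinality equals |F| = 2^{k(n−k)} · |GL(n−k, F_2)| · 2^{n(n+1)/2 − k(k+1)/2}, i.e., |F| = (2^{n(n+1)/2 + k(n−k)} / 2^{k(k+1)/2}) · ∏_{m=1}^{n−k} (2^{n−k} − 2^{m−1}). -/
import Mathlib


open Matrix

/-- The standard symplectic form `Ω = [[0, I_n],[I_n, 0]]` over `F₂`. -/
def Omega (n : ℕ) : Matrix (Fin n ⊕ Fin n) (Fin n ⊕ Fin n) (ZMod 2) :=
  Matrix.fromBlocks 0 1 1 0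

/-- The set `Sp(F₂^{2n}) = { A | Aᵀ Ω A = Ω }`. -/
def Sp (n : ℕ) : Set (Matrix (Fin n ⊕ Fin n) (Fin n ⊕ Fin n) (ZMod 2)) :=
  {A | Aᵀ * Omega n * A = Omega n}

/-- The freedom gauge set `𝓕`: symplectic matrices `[[Fxx,0],[Fzx,Fzz]]` whose blocks
obey `Fxx = [[I_k,*],[0,*]]`, `Fzz = [[I_k,0],[*,*]]`, `Fzx = [[0_k,*],[*,*]]`. -/
def FreeSet (n k : ℕ) : Set (Matrix (Fin n ⊕ Fin n) (Fin n ⊕ Fin n) (ZMod 2)) :=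
  {M | M ∈ Sp n ∧ ∃ Fxx Fzx Fzz : Matrix (Fin n) (Fin n) (ZMod 2),
    M = Matrix.fromBlocks Fxx 0 Fzx Fzz ∧
    (∀ i j : Fin n, (j : ℕ) < k → Fxx i j = if i = j then 1 else 0) ∧
    (∀ i j : Fin n, (i : ℕ) < k → Fzz i j = if i = j then 1 else 0) ∧
    (∀ i j : Fin n, (i : ℕ) < k → (j : ℕ) < k → Fzx i j = 0)}

namespace FreeAux

abbrev F2 := ZMod 2

def Xset (n k : ℕ) : Set (Matrix (Fin n) (Fin n) F2) :=
  {X | IsUnit X ∧ ∀ i j : Fin n, (j : ℕ) < k → X i j = if i = j then 1 else 0}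

def Sset (n k : ℕ) : Set (Matrix (Fin n) (Fin n) F2) :=
  {S | Sᵀ = S ∧ ∀ i j : Fin n, (i : ℕ) < k → (j : ℕ) < k → S i j = 0}

lemma inv_col {n k : ℕ} {X : Matrix (Fin n) (Fin n) F2} (hX : IsUnit X)
    (hcol : ∀ i j : Fin n, (j : ℕ) < k → X i j = if i = j then 1 else 0)
    {j : Fin n} (hj : (j : ℕ) < k) (l : Fin n) :
    X⁻¹ l j = if l = j then 1 else 0 := by
  have hd : IsUnit X.det := (isUnit_iff_isUnit_det X).mp hX
  have h1 : X⁻¹ * X = 1 := nonsing_inv_mul X hd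
  have h := congrFun (congrFun h1 l) j
  rw [Matrix.mul_apply] at h
  have h2 : ∑ m, X⁻¹ l m * X m j = X⁻¹ l j := by
    rw [Finset.sum_congr rfl (fun m _ => by rw [hcol m j hj])]
    simp
  rw [h2] at h
  rw [h, Matrix.one_apply]

lemma key_mul {n : ℕ} (X Z W : Matrix (Fin n) (Fin n) F2) :
    (fromBlocks X 0 Z W)ᵀ * Omega n * (fromBlocks X 0 Z W)
      = fromBlocks (Zᵀ*X + Xᵀ*Z) (Xᵀ*W) (Wᵀ*X) 0 := by
  simp [Omega, fromBlocks_transpose, fromBlocks_multiply, Matrix.mul_assoc]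

lemma free_iff {n k : ℕ} (M : Matrix (Fin n ⊕ Fin n) (Fin n ⊕ Fin n) F2) :
    M ∈ FreeSet n k ↔ ∃ X ∈ Xset n k, ∃ S ∈ Sset n k,
      M = fromBlocks X 0 ((Xᵀ)⁻¹ * S) (Xᵀ)⁻¹ := by
  constructor
  · rintro ⟨hsp, X, Z, W, rfl, hxx, hzz, hzx⟩
    rw [Sp, Set.mem_setOf_eq, key_mul] at hsp
    have h1 : Zᵀ*X + Xᵀ*Z = 0 := by
      simpa [Omega] using congrArg Matrix.toBlocks₁₁ hsp
    have h2 : Xᵀ*W = 1 := by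
      simpa [Omega] using congrArg Matrix.toBlocks₁₂ hsp
    have hdXt : IsUnit (Xᵀ).det := isUnit_det_of_right_inverse h2
    have hdX : IsUnit X.det := by rwa [Matrix.det_transpose] at hdXt
    have hXu : IsUnit X := (isUnit_iff_isUnit_det X).mpr hdX
    have hW : (Xᵀ)⁻¹ = W := inv_eq_right_inv h2
    have hsym : Zᵀ*X = Xᵀ*Z := by
      have := add_eq_zero_iff_eq_neg.mp h1
      rw [this]; ext i j; exact (CharTwo.neg_eq _)
    refine ⟨X, ⟨hXu, hxx⟩, Xᵀ*Z, ⟨?_, ?_⟩, ?_⟩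
    · rw [Matrix.transpose_mul, Matrix.transpose_transpose, hsym]
    · intro i j hi hj
      rw [Matrix.mul_apply]
      have : ∀ m, Xᵀ i m * Z m j = (if m = i then 1 else 0) * Z m j := by
        intro m; rw [Matrix.transpose_apply, hxx m i hi]
      rw [Finset.sum_congr rfl (fun m _ => this m)]
      simp [hzx i j hi hj]
    · have : (Xᵀ)⁻¹ * (Xᵀ*Z) = Z := by
        rw [← Matrix.mul_assoc, nonsing_inv_mul _ hdXt, Matrix.one_mul]
      rw [this, hW]
  · rintro ⟨X, ⟨hXu, hxx⟩, S, ⟨hSsym, hS0⟩, rfl⟩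
    have hdX : IsUnit X.det := (isUnit_iff_isUnit_det X).mp hXu
    have hdXt : IsUnit (Xᵀ).det := by rwa [Matrix.det_transpose]
    have hti : ((Xᵀ)⁻¹)ᵀ = X⁻¹ := by
      rw [← Matrix.transpose_nonsing_inv, Matrix.transpose_transpose]
    refine ⟨?_, X, (Xᵀ)⁻¹ * S, (Xᵀ)⁻¹, rfl, hxx, ?_, ?_⟩
    · rw [Sp, Set.mem_setOf_eq, key_mul]
      have e1 : Xᵀ * ((Xᵀ)⁻¹ * S) = S := by
        rw [← Matrix.mul_assoc, mul_nonsing_inv _ hdXt, Matrix.one_mul]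
      have e2 : ((Xᵀ)⁻¹ * S)ᵀ * X = S := by
        rw [Matrix.transpose_mul, hti, Matrix.mul_assoc, nonsing_inv_mul _ hdX,
          Matrix.mul_one, hSsym]
      have e3 : Xᵀ * (Xᵀ)⁻¹ = 1 := mul_nonsing_inv _ hdXt
      have e4 : ((Xᵀ)⁻¹)ᵀ * X = 1 := by rw [hti, nonsing_inv_mul _ hdX]
      have e5 : S + S = (0 : Matrix (Fin n) (Fin n) F2) := by
        ext i j
        simp only [Matrix.add_apply, Matrix.zero_apply]
        exact CharTwo.add_self_eq_zero _
      rw [e1, e2, e3, e4, e5, Omega]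
    · intro i j hi
      have : (Xᵀ)⁻¹ i j = X⁻¹ j i := by rw [← hti, Matrix.transpose_apply]
      rw [this, inv_col hXu hxx hi j]
      simp [eq_comm]
    · intro i j hi hj
      rw [Matrix.mul_apply]
      have : ∀ m, (Xᵀ)⁻¹ i m * S m j = (if m = i then 1 else 0) * S m j := by
        intro m
        rw [show (Xᵀ)⁻¹ i m = X⁻¹ m i by rw [← hti, Matrix.transpose_apply],
          inv_col hXu hxx hi m]
      rw [Finset.sum_congr rfl (fun m _ => this m)]
      simp [hS0 i j hi hj]



abbrev UIdx (n k : ℕ) := {p : Fin n × Fin n // p.1 ≤ p.2 ∧ k ≤ (p.2 : ℕ)}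

def ssetEquiv (n k : ℕ) : Sset n k ≃ (UIdx n k → F2) where
  toFun S p := S.1 p.1.1 p.1.2
  invFun f := ⟨Matrix.of fun i j =>
      if h : i ≤ j then (if hk : k ≤ (j : ℕ) then f ⟨(i, j), h, hk⟩ else 0)
      else (if hk : k ≤ (i : ℕ) then f ⟨(j, i), le_of_not_ge h, hk⟩ else 0), by
    constructor
    · ext i j
      simp only [Matrix.transpose_apply, Matrix.of_apply]
      by_cases h1 : i ≤ j <;> by_cases h2 : j ≤ i
      · have : i = j := le_antisymm h1 h2
        subst this; rfl
      · rw [dif_pos h1, dif_neg h2]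
      · rw [dif_neg h1, dif_pos h2]
      · exact absurd (le_of_not_ge h1) h2
    · intro i j hi hj
      simp only [Matrix.of_apply]
      by_cases h1 : i ≤ j
      · rw [dif_pos h1, dif_neg (by omega)]
      · rw [dif_neg h1, dif_neg (by omega)]⟩
  left_inv S := by
    apply Subtype.ext
    ext i j
    simp only [Matrix.of_apply]
    by_cases h1 : i ≤ j
    · rw [dif_pos h1]
      by_cases h2 : k ≤ (j : ℕ)
      · rw [dif_pos h2]
      · rw [dif_neg h2]
        exact (S.2.2 i j (by omega) (by omega)).symm
    · rw [dif_neg h1]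
      by_cases h2 : k ≤ (i : ℕ)
      · rw [dif_pos h2]
        show S.1 j i = S.1 i j
        conv_rhs => rw [← S.2.1]
        rfl
      · rw [dif_neg h2]
        have hji : j ≤ i := le_of_not_ge h1
        have : S.1 j i = 0 := S.2.2 j i (by omega) (by omega)
        rw [← S.2.1, Matrix.transpose_apply, this]
  right_inv f := by
    funext p
    obtain ⟨⟨a, b⟩, hab⟩ := p
    simp only [Matrix.of_apply]
    rw [dif_pos hab.1, dif_pos hab.2]

lemma card_fiber (n k : ℕ) (j : Fin n) :
    Fintype.card {i : Fin n // i ≤ j ∧ k ≤ (j : ℕ)} =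
      if k ≤ (j : ℕ) then (j : ℕ) + 1 else 0 := by
  by_cases h : k ≤ (j : ℕ)
  · rw [if_pos h, Fintype.card_subtype]
    have : (Finset.univ.filter fun i : Fin n => i ≤ j ∧ k ≤ (j : ℕ)) = Finset.Iic j := by
      ext i; simp [h]
    rw [this, Fin.card_Iic]
  · rw [if_neg h]
    have : IsEmpty {i : Fin n // i ≤ j ∧ k ≤ (j : ℕ)} := ⟨fun x => h x.2.2⟩
    exact Fintype.card_eq_zero
def uidxSigma (n k : ℕ) : UIdx n k ≃ Σ j : Fin n, {i : Fin n // i ≤ j ∧ k ≤ (j : ℕ)} where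
  toFun p := ⟨p.1.2, p.1.1, p.2⟩
  invFun s := ⟨(s.2.1, s.1), s.2.2⟩
  left_inv p := rfl
  right_inv s := rfl

lemma sum_gauss (n : ℕ) : ∑ j ∈ Finset.range n, (j + 1) = n * (n + 1) / 2 := by
  have h1 : ∑ j ∈ Finset.range (n + 1), j = (∑ j ∈ Finset.range n, (j + 1)) + 0 :=
    Finset.sum_range_succ' id n
  have h2 := Finset.sum_range_id_mul_two (n + 1)
  rw [h1, add_zero] at h2
  have h3 : (∑ j ∈ Finset.range n, (j + 1)) * 2 = (n + 1) * n := by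
    rw [h2, Nat.add_sub_cancel]
  exact (Nat.div_eq_of_eq_mul_left two_pos (by rw [h3]; ring)).symm

lemma card_uidx (n k : ℕ) (hk : k ≤ n) :
    Fintype.card (UIdx n k) = n * (n + 1) / 2 - k * (k + 1) / 2 := by
  rw [Fintype.card_congr (uidxSigma n k), Fintype.card_sigma]
  have h1 : ∑ j : Fin n, Fintype.card {i : Fin n // i ≤ j ∧ k ≤ (j : ℕ)}
      = ∑ j ∈ Finset.range n, if k ≤ j then j + 1 else 0 := by
    rw [Finset.sum_congr rfl fun (j : Fin n) _ => card_fiber n k j]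
    exact Fin.sum_univ_eq_sum_range (fun j => if k ≤ j then j + 1 else 0) n
  rw [h1]
  have hsub : ∑ j ∈ Finset.range n, (if j < k then j + 1 else 0)
      = ∑ j ∈ Finset.range k, (j + 1) := by
    rw [← Finset.sum_subset (Finset.range_subset_range.mpr hk)
      (fun x _ hx => by simp only [Finset.mem_range, not_lt] at hx; rw [if_neg (by omega)])]
    exact Finset.sum_congr rfl fun j hj => by
      rw [if_pos (Finset.mem_range.mp hj)]
  have hsplit : (∑ j ∈ Finset.range n, if k ≤ j then j + 1 else 0)
      + ∑ j ∈ Finset.range k, (j + 1) = ∑ j ∈ Finset.range n, (j + 1) := by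
    rw [← hsub, ← Finset.sum_add_distrib]
    refine Finset.sum_congr rfl fun j _ => ?_
    by_cases h : k ≤ j
    · rw [if_pos h, if_neg (by omega), add_zero]
    · rw [if_neg h, if_pos (by omega), zero_add]
  rw [sum_gauss n, sum_gauss k] at hsplit
  exact Nat.eq_sub_of_add_eq hsplit

lemma card_sset (n k : ℕ) (hk : k ≤ n) :
    Nat.card (Sset n k) = 2 ^ (n * (n + 1) / 2 - k * (k + 1) / 2) := by
  rw [Nat.card_congr (ssetEquiv n k), Nat.card_eq_fintype_card, Fintype.card_fun,
    ZMod.card, card_uidx n k hk]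



variable {n k : ℕ}

/-- The index equivalence `Fin k ⊕ Fin (n-k) ≃ Fin n`. -/
def eIdx (hk : k ≤ n) : Fin k ⊕ Fin (n - k) ≃ Fin n :=
  finSumFinEquiv.trans (finCongr (Nat.add_sub_cancel' hk))

lemma eIdx_inl (hk : k ≤ n) (a : Fin k) : ((eIdx hk (Sum.inl a) : Fin n) : ℕ) = (a : ℕ) := by
  simp [eIdx]

lemma eIdx_inr (hk : k ≤ n) (b : Fin (n - k)) :
    ((eIdx hk (Sum.inr b) : Fin n) : ℕ) = k + (b : ℕ) := by
  simp [eIdx]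

lemma eIdx_symm_of_lt (hk : k ≤ n) {j : Fin n} (hj : (j : ℕ) < k) :
    (eIdx hk).symm j = Sum.inl ⟨(j : ℕ), hj⟩ := by
  rw [Equiv.symm_apply_eq]
  apply Fin.ext
  rw [eIdx_inl]

noncomputable def xsetEquiv (hk : k ≤ n) :
    Xset n k ≃ Matrix (Fin k) (Fin (n - k)) F2 ×
      {B : Matrix (Fin (n - k)) (Fin (n - k)) F2 // IsUnit B} where
  toFun X := by
    refine ⟨(X.1.submatrix (eIdx hk) (eIdx hk)).toBlocks₁₂,
      ⟨(X.1.submatrix (eIdx hk) (eIdx hk)).toBlocks₂₂, ?_⟩⟩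
    obtain ⟨hXu, hcol⟩ := X.2
    set N := X.1.submatrix (eIdx hk) (eIdx hk) with hN
    have h11 : N.toBlocks₁₁ = 1 := by
      ext a a'
      show X.1 (eIdx hk (Sum.inl a)) (eIdx hk (Sum.inl a')) = _
      rw [hcol _ _ (by rw [eIdx_inl]; exact a'.2), Matrix.one_apply]
      congr 1
      simp [Equiv.apply_eq_iff_eq]
    have h21 : N.toBlocks₂₁ = 0 := by
      ext b a'
      show X.1 (eIdx hk (Sum.inr b)) (eIdx hk (Sum.inl a')) = _
      rw [hcol _ _ (by rw [eIdx_inl]; exact a'.2)]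
      rw [if_neg (fun h => by simpa using (eIdx hk).injective h)]
      rfl
    have hdet : N.det = X.1.det := Matrix.det_submatrix_equiv_self _ _
    have hNdet : IsUnit N.det := by rw [hdet]; exact (isUnit_iff_isUnit_det _).mp hXu
    have hNform : N = fromBlocks 1 N.toBlocks₁₂ 0 N.toBlocks₂₂ := by
      rw [← h11, ← h21, fromBlocks_toBlocks]
    rw [hNform, Matrix.det_fromBlocks_zero₂₁, Matrix.det_one, one_mul] at hNdet
    exact (isUnit_iff_isUnit_det _).mpr hNdet
  invFun p := by
    refine ⟨(fromBlocks 1 p.1 0 p.2.1).submatrix (eIdx hk).symm (eIdx hk).symm, ?_, ?_⟩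
    · rw [isUnit_iff_isUnit_det, Matrix.det_submatrix_equiv_self,
        Matrix.det_fromBlocks_zero₂₁, Matrix.det_one, one_mul]
      exact (isUnit_iff_isUnit_det _).mp p.2.2
    · intro i j hj
      rw [Matrix.submatrix_apply, eIdx_symm_of_lt hk hj]
      rcases h : (eIdx hk).symm i with a | b
      · have hi : i = eIdx hk (Sum.inl a) := by
          rw [← h, Equiv.apply_symm_apply]
        show (1 : Matrix (Fin k) (Fin k) F2) a ⟨(j : ℕ), hj⟩ = _
        have hj' : eIdx hk (Sum.inl ⟨(j : ℕ), hj⟩) = j := by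
          apply Fin.ext; rw [eIdx_inl]
        have hiff : a = ⟨(j : ℕ), hj⟩ ↔ i = j := by
          rw [hi]
          constructor
          · rintro rfl; exact hj'
          · intro hh
            have : Sum.inl (β := Fin (n - k)) a = Sum.inl ⟨(j : ℕ), hj⟩ :=
              (eIdx hk).injective (by rw [hh, hj'])
            exact Sum.inl_injective this
        rw [Matrix.one_apply, if_congr hiff rfl rfl]
      · have hi : i = eIdx hk (Sum.inr b) := by rw [← h, Equiv.apply_symm_apply]
        show (0 : Matrix (Fin (n-k)) (Fin k) F2) b ⟨(j : ℕ), hj⟩ = _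
        rw [if_neg, Matrix.zero_apply]
        intro hij
        rw [hij] at h
        rw [eIdx_symm_of_lt hk hj] at h
        simp at h
  left_inv X := by
    apply Subtype.ext
    obtain ⟨hXu, hcol⟩ := X.2
    set N := X.1.submatrix (eIdx hk) (eIdx hk) with hN
    have h11 : N.toBlocks₁₁ = 1 := by
      ext a a'
      show X.1 (eIdx hk (Sum.inl a)) (eIdx hk (Sum.inl a')) = _
      rw [hcol _ _ (by rw [eIdx_inl]; exact a'.2), Matrix.one_apply]
      congr 1
      simp [Equiv.apply_eq_iff_eq]
    have h21 : N.toBlocks₂₁ = 0 := by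
      ext b a'
      show X.1 (eIdx hk (Sum.inr b)) (eIdx hk (Sum.inl a')) = _
      rw [hcol _ _ (by rw [eIdx_inl]; exact a'.2)]
      rw [if_neg (fun h => by simpa using (eIdx hk).injective h)]
      rfl
    show (fromBlocks 1 N.toBlocks₁₂ 0 N.toBlocks₂₂).submatrix (eIdx hk).symm (eIdx hk).symm = X.1
    rw [← h11, ← h21, fromBlocks_toBlocks, hN, Matrix.submatrix_submatrix]
    simp [Equiv.self_comp_symm]
  right_inv p := by
    have hre : ((fromBlocks 1 p.1 0 p.2.1).submatrix (eIdx hk).symm (eIdx hk).symm).submatrix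
        (eIdx hk) (eIdx hk) = fromBlocks 1 p.1 0 p.2.1 := by
      rw [Matrix.submatrix_submatrix]
      simp [Equiv.symm_comp_self]
    refine Prod.ext ?_ (Subtype.ext ?_)
    · show Matrix.toBlocks₁₂ (((fromBlocks 1 p.1 0 p.2.1).submatrix (eIdx hk).symm
        (eIdx hk).symm).submatrix (eIdx hk) (eIdx hk)) = p.1
      rw [hre]; rfl
    · show Matrix.toBlocks₂₂ (((fromBlocks 1 p.1 0 p.2.1).submatrix (eIdx hk).symm
        (eIdx hk).symm).submatrix (eIdx hk) (eIdx hk)) = p.2.1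
      rw [hre]; rfl

noncomputable def unitsEquiv (m : ℕ) :
    {B : Matrix (Fin m) (Fin m) F2 // IsUnit B} ≃ GL (Fin m) F2 where
  toFun x := x.2.unit
  invFun u := ⟨(u : Matrix (Fin m) (Fin m) F2), u.isUnit⟩
  left_inv x := Subtype.ext x.2.unit_spec
  right_inv u := Units.ext rfl

lemma card_xset (hk : k ≤ n) :
    Nat.card (Xset n k) = 2 ^ (k * (n - k)) * Nat.card (GL (Fin (n - k)) F2) := by
  rw [Nat.card_congr (xsetEquiv hk), Nat.card_prod, Nat.card_congr (unitsEquiv (n - k))]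
  congr 1
  rw [Nat.card_eq_fintype_card,
    show Fintype.card (Matrix (Fin k) (Fin (n - k)) F2)
      = Fintype.card (Fin k → Fin (n - k) → F2) from rfl,
    Fintype.card_fun, Fintype.card_fun, ZMod.card, Fintype.card_fin, Fintype.card_fin,
    ← pow_mul, Nat.mul_comm (n - k) k]


lemma det_t {n : ℕ} {X : Matrix (Fin n) (Fin n) F2} (hXu : IsUnit X) : IsUnit (Xᵀ).det := by
  rw [Matrix.det_transpose]; exact (isUnit_iff_isUnit_det X).mp hXu

noncomputable def equivProd (n k : ℕ) : FreeSet n k ≃ Xset n k × Sset n k where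
  toFun M :=
    ⟨⟨M.1.toBlocks₁₁, by
        obtain ⟨X, hX, S, hS, h⟩ := (free_iff M.1).mp M.2
        rw [h]; simpa using hX⟩,
      ⟨(M.1.toBlocks₁₁)ᵀ * M.1.toBlocks₂₁, by
        obtain ⟨X, hX, S, hS, h⟩ := (free_iff M.1).mp M.2
        rw [h]
        simp only [toBlocks_fromBlocks₁₁, toBlocks_fromBlocks₂₁]
        rw [← Matrix.mul_assoc, mul_nonsing_inv _ (det_t hX.1), Matrix.one_mul]
        exact hS⟩⟩
  invFun p := ⟨fromBlocks p.1.1 0 ((p.1.1ᵀ)⁻¹ * p.2.1) (p.1.1ᵀ)⁻¹,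
    (free_iff _).mpr ⟨p.1.1, p.1.2, p.2.1, p.2.2, rfl⟩⟩
  left_inv M := by
    obtain ⟨X, hX, S, hS, h⟩ := (free_iff M.1).mp M.2
    apply Subtype.ext
    show fromBlocks _ 0 _ _ = M.1
    simp only [h, toBlocks_fromBlocks₁₁, toBlocks_fromBlocks₂₁]
    rw [show Xᵀ * ((Xᵀ)⁻¹ * S) = S by
      rw [← Matrix.mul_assoc, mul_nonsing_inv _ (det_t hX.1), Matrix.one_mul]]
  right_inv p := by
    refine Prod.ext (Subtype.ext ?_) (Subtype.ext ?_)
    · exact toBlocks_fromBlocks₁₁ _ _ _ _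
    · show (Matrix.toBlocks₁₁ (fromBlocks p.1.1 0 ((p.1.1ᵀ)⁻¹ * p.2.1) (p.1.1ᵀ)⁻¹))ᵀ *
        Matrix.toBlocks₂₁ (fromBlocks p.1.1 0 ((p.1.1ᵀ)⁻¹ * p.2.1) (p.1.1ᵀ)⁻¹) = p.2.1
      rw [toBlocks_fromBlocks₁₁, toBlocks_fromBlocks₂₁, ← Matrix.mul_assoc,
        mul_nonsing_inv _ (det_t p.1.2.1), Matrix.one_mul]

lemma card_free (n k : ℕ) :
    Nat.card (FreeSet n k) = Nat.card (Xset n k) * Nat.card (Sset n k) := by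
  rw [Nat.card_congr (equivProd n k), Nat.card_prod]

end FreeAux

/-- The cardinality of the freedom gauge group:
`|𝓕| = 2^{k(n−k)} · |GL(n−k, F₂)| · 2^{n(n+1)/2 − k(k+1)/2}`, which equals
`(2^{n(n+1)/2 + k(n−k)} / 2^{k(k+1)/2}) · ∏_{m=1}^{n−k} (2^{n−k} − 2^{m−1})`. -/
theorem stmt_5 (n k : ℕ) (hk : k ≤ n) :
    Nat.card (FreeSet n k) =
      2 ^ (k * (n - k)) * Nat.card (GL (Fin (n - k)) (ZMod 2)) *
        2 ^ (n * (n + 1) / 2 - k * (k + 1) / 2) ∧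
    Nat.card (FreeSet n k) =
      2 ^ (n * (n + 1) / 2 + k * (n - k)) / 2 ^ (k * (k + 1) / 2) *
        ∏ m ∈ Finset.range (n - k), (2 ^ (n - k) - 2 ^ m) := by
  have hcard : Nat.card (FreeSet n k) =
      2 ^ (k * (n - k)) * Nat.card (GL (Fin (n - k)) (ZMod 2)) *
        2 ^ (n * (n + 1) / 2 - k * (k + 1) / 2) := by
    rw [FreeAux.card_free n k, FreeAux.card_xset hk, FreeAux.card_sset n k hk]
  refine ⟨hcard, ?_⟩
  rw [hcard, Matrix.card_GL_field, ZMod.card,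
    Fin.prod_univ_eq_prod_range (fun m => 2 ^ (n - k) - 2 ^ m) (n - k)]
  have hBA : k * (k + 1) / 2 ≤ n * (n + 1) / 2 :=
    Nat.div_le_div_right (Nat.mul_le_mul hk (by omega))
  generalize n * (n + 1) / 2 = A at hBA ⊢
  generalize k * (k + 1) / 2 = B at hBA ⊢
  rw [Nat.pow_div (by omega) two_pos,
    show A + k * (n - k) - B = k * (n - k) + (A - B) from by omega, pow_add]
  ring
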